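/- Upper bound in the limit (claim (5.6) in the proof of Lemma 5.1): Let ξ_m → ξ in ℝ, p_m → p in ℝ^n with p ≠ 0, and symmetric matrices M_m → M. Then limsup_{m→∞} H_m⁻(ξ_m, p_m, M_m) ≤ −F(ξ, p, M). -/
import Mathlib


open scoped RealInnerProductSpace
open Filter Topology

noncomputable section

namespace TugOfWar

/-- The quadratic form `vᵀ Σ M Σ v`, where `Σ = diag (σ 1, …, σ n)`. -/
def sigQF {n : ℕ} (σ : Fin n → ℝ) (M : Matrix (Fin n) (Fin n) ℝ)
    (v : EuclideanSpace ℝ (Fin n)) : ℝ :=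
  ∑ i, ∑ j, (σ i * v i) * M i j * (σ j * v j)

/-- `trace (Σ² M)`. -/
def trSig2 {n : ℕ} (σ : Fin n → ℝ) (M : Matrix (Fin n) (Fin n) ℝ) : ℝ :=
  ∑ i, σ i ^ 2 * M i i

/-- The integrand `Φ(θ⁺,θ⁻,d⁺,d⁻,p,M)`. -/
def Phi {n : ℕ} (σ : Fin n → ℝ) (μ : EuclideanSpace ℝ (Fin n))
    (θp θm : EuclideanSpace ℝ (Fin n)) (dp dm : ℝ)
    (p : EuclideanSpace ℝ (Fin n)) (M : Matrix (Fin n) (Fin n) ℝ) : ℝ :=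
  -(1 / 2) * sigQF σ M (θp - θm) - (1 / 2) * trSig2 σ M
    - (dp + dm) * ⟪θp + θm, p⟫ - ⟪μ, p⟫

/-- The control set `ℋ_m = S^{n-1} × [0, m]`. -/
def Hset (n : ℕ) (m : ℕ) : Set (EuclideanSpace ℝ (Fin n) × ℝ) :=
  {a | ‖a.1‖ = 1 ∧ a.2 ∈ Set.Icc (0 : ℝ) (m : ℝ)}

/-- `H_m⁺(ξ,p,M) = sup_{(θ⁻,d⁻)∈ℋ_m} inf_{(θ⁺,d⁺)∈ℋ_m} Φ + rξ`. -/
def Hplus {n : ℕ} (σ : Fin n → ℝ) (μ : EuclideanSpace ℝ (Fin n)) (r : ℝ) (m : ℕ)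
    (ξ : ℝ) (p : EuclideanSpace ℝ (Fin n)) (M : Matrix (Fin n) (Fin n) ℝ) : ℝ :=
  sSup ((fun a => sInf ((fun b => Phi σ μ b.1 a.1 b.2 a.2 p M) '' Hset n m)) '' Hset n m)
    + r * ξ

/-- `H_m⁻(ξ,p,M) = inf_{(θ⁺,d⁺)∈ℋ_m} sup_{(θ⁻,d⁻)∈ℋ_m} Φ + rξ`. -/
def Hminus {n : ℕ} (σ : Fin n → ℝ) (μ : EuclideanSpace ℝ (Fin n)) (r : ℝ) (m : ℕ)
    (ξ : ℝ) (p : EuclideanSpace ℝ (Fin n)) (M : Matrix (Fin n) (Fin n) ℝ) : ℝ :=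
  sInf ((fun b => sSup ((fun a => Phi σ μ b.1 a.1 b.2 a.2 p M) '' Hset n m)) '' Hset n m)
    + r * ξ

/-- The limit operator `F(ξ,p,M)`, for `p ≠ 0`. -/
def Fop {n : ℕ} (σ : Fin n → ℝ) (μ : EuclideanSpace ℝ (Fin n)) (r : ℝ)
    (ξ : ℝ) (p : EuclideanSpace ℝ (Fin n)) (M : Matrix (Fin n) (Fin n) ℝ) : ℝ :=
  (2 / ‖p‖ ^ 2) * sigQF σ M p + (1 / 2) * trSig2 σ M + ⟪μ, p⟫ - r * ξ

/-- `F^*(ξ,0,M) = limsup_{p → 0, p ≠ 0} F(ξ,p,M)`. -/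
def Fupper {n : ℕ} (σ : Fin n → ℝ) (μ : EuclideanSpace ℝ (Fin n)) (r : ℝ)
    (ξ : ℝ) (M : Matrix (Fin n) (Fin n) ℝ) : ℝ :=
  Filter.limsup (fun p => Fop σ μ r ξ p M) (𝓝[≠] (0 : EuclideanSpace ℝ (Fin n)))

/-- `F_*(ξ,0,M) = liminf_{p → 0, p ≠ 0} F(ξ,p,M)`. -/
def Flower {n : ℕ} (σ : Fin n → ℝ) (μ : EuclideanSpace ℝ (Fin n)) (r : ℝ)
    (ξ : ℝ) (M : Matrix (Fin n) (Fin n) ℝ) : ℝ :=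
  Filter.liminf (fun p => Fop σ μ r ξ p M) (𝓝[≠] (0 : EuclideanSpace ℝ (Fin n)))

/-- The parabolic domain `ℝ^n × [0,T]`. -/
def Dom (n : ℕ) (T : ℝ) : Set (EuclideanSpace ℝ (Fin n) × ℝ) :=
  Set.univ ×ˢ Set.Icc 0 T

/-- Test functions: `φ` is `C¹` in time with derivative `φt`, and `C²` in space with spatial
gradient `Dφ` and (symmetric) spatial Hessian `D2φ`, all jointly continuous. -/
def IsC12 {n : ℕ} (φ φt : EuclideanSpace ℝ (Fin n) → ℝ → ℝ)
    (Dφ : EuclideanSpace ℝ (Fin n) → ℝ → EuclideanSpace ℝ (Fin n))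
    (D2φ : EuclideanSpace ℝ (Fin n) → ℝ → Matrix (Fin n) (Fin n) ℝ) : Prop :=
  Continuous (fun q : EuclideanSpace ℝ (Fin n) × ℝ => φt q.1 q.2) ∧
  Continuous (fun q : EuclideanSpace ℝ (Fin n) × ℝ => Dφ q.1 q.2) ∧
  Continuous (fun q : EuclideanSpace ℝ (Fin n) × ℝ => D2φ q.1 q.2) ∧
  (∀ x t, HasDerivAt (fun s => φ x s) (φt x t) t) ∧
  (∀ x t, HasGradientAt (fun y => φ y t) (Dφ x t) x) ∧
  (∀ x t, HasFDerivAt (fun y => Dφ y t) (Matrix.toEuclideanCLM (𝕜 := ℝ) (D2φ x t)) x) ∧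
  (∀ x t, (D2φ x t).IsSymm)

/-- At most linear growth on `ℝ^n × [0,T]`. -/
def LinGrowth {n : ℕ} (T : ℝ) (u : EuclideanSpace ℝ (Fin n) → ℝ → ℝ) : Prop :=
  ∃ c : ℝ, ∀ x t, t ∈ Set.Icc 0 T → |u x t| ≤ c * (1 + ‖x‖)

/-- Continuity on `ℝ^n × [0,T]`. -/
def ContOn {n : ℕ} (T : ℝ) (u : EuclideanSpace ℝ (Fin n) → ℝ → ℝ) : Prop :=
  ContinuousOn (fun q : EuclideanSpace ℝ (Fin n) × ℝ => u q.1 q.2) (Dom n T)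

/-- The payoff `g` is positive, and `sup g + Lip(g) ≤ L`. -/
def PayoffOK {n : ℕ} (g : EuclideanSpace ℝ (Fin n) → ℝ) (L : ℝ) : Prop :=
  (∀ x, 0 < g x) ∧
  ∃ B K : ℝ, B + K ≤ L ∧ (∀ x, g x ≤ B) ∧ ∀ x y, |g x - g y| ≤ K * ‖x - y‖

/-- Viscosity supersolution of `∂ₜ u − H(u,Du,D²u) = 0` with terminal data `g`. -/
def SuperSolH {n : ℕ} (T : ℝ)
    (H : ℝ → EuclideanSpace ℝ (Fin n) → Matrix (Fin n) (Fin n) ℝ → ℝ)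
    (g : EuclideanSpace ℝ (Fin n) → ℝ) (u : EuclideanSpace ℝ (Fin n) → ℝ → ℝ) : Prop :=
  LowerSemicontinuousOn (fun q : EuclideanSpace ℝ (Fin n) × ℝ => u q.1 q.2) (Dom n T) ∧
  LinGrowth T u ∧
  (∀ x, g x ≤ u x T) ∧
  ∀ x₀ t₀, t₀ ∈ Set.Ioo 0 T →
    ∀ φ φt Dφ D2φ, IsC12 φ φt Dφ D2φ →
      u x₀ t₀ = φ x₀ t₀ →
      (∀ x t, t ∈ Set.Icc 0 T → (x, t) ≠ (x₀, t₀) → φ x t < u x t) →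
      φt x₀ t₀ ≤ H (u x₀ t₀) (Dφ x₀ t₀) (D2φ x₀ t₀)

/-- Viscosity subsolution of `∂ₜ u − H(u,Du,D²u) = 0` with terminal data `g`. -/
def SubSolH {n : ℕ} (T : ℝ)
    (H : ℝ → EuclideanSpace ℝ (Fin n) → Matrix (Fin n) (Fin n) ℝ → ℝ)
    (g : EuclideanSpace ℝ (Fin n) → ℝ) (u : EuclideanSpace ℝ (Fin n) → ℝ → ℝ) : Prop :=
  UpperSemicontinuousOn (fun q : EuclideanSpace ℝ (Fin n) × ℝ => u q.1 q.2) (Dom n T) ∧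
  LinGrowth T u ∧
  (∀ x, u x T ≤ g x) ∧
  ∀ x₀ t₀, t₀ ∈ Set.Ioo 0 T →
    ∀ φ φt Dφ D2φ, IsC12 φ φt Dφ D2φ →
      u x₀ t₀ = φ x₀ t₀ →
      (∀ x t, t ∈ Set.Icc 0 T → (x, t) ≠ (x₀, t₀) → u x t < φ x t) →
      H (u x₀ t₀) (Dφ x₀ t₀) (D2φ x₀ t₀) ≤ φt x₀ t₀

/-- Continuous viscosity solution of `∂ₜ u − H(u,Du,D²u) = 0` with terminal data `g`. -/
def SolH {n : ℕ} (T : ℝ)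
    (H : ℝ → EuclideanSpace ℝ (Fin n) → Matrix (Fin n) (Fin n) ℝ → ℝ)
    (g : EuclideanSpace ℝ (Fin n) → ℝ) (u : EuclideanSpace ℝ (Fin n) → ℝ → ℝ) : Prop :=
  ContOn T u ∧ SuperSolH T H g u ∧ SubSolH T H g u

/-- Viscosity supersolution of `∂ₜ u + F(u,Du,D²u) = 0` with terminal data `g`. -/
def SuperSolF {n : ℕ} (T : ℝ) (σ : Fin n → ℝ) (μ : EuclideanSpace ℝ (Fin n)) (r : ℝ)
    (g : EuclideanSpace ℝ (Fin n) → ℝ) (u : EuclideanSpace ℝ (Fin n) → ℝ → ℝ) : Prop :=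
  LowerSemicontinuousOn (fun q : EuclideanSpace ℝ (Fin n) × ℝ => u q.1 q.2) (Dom n T) ∧
  LinGrowth T u ∧
  (∀ x, g x ≤ u x T) ∧
  ∀ x₀ t₀, t₀ ∈ Set.Ioo 0 T →
    ∀ φ φt Dφ D2φ, IsC12 φ φt Dφ D2φ →
      u x₀ t₀ = φ x₀ t₀ →
      (∀ x t, t ∈ Set.Icc 0 T → (x, t) ≠ (x₀, t₀) → φ x t < u x t) →
      (Dφ x₀ t₀ ≠ 0 →
        φt x₀ t₀ + Fop σ μ r (u x₀ t₀) (Dφ x₀ t₀) (D2φ x₀ t₀) ≤ 0) ∧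
      (Dφ x₀ t₀ = 0 →
        φt x₀ t₀ + Flower σ μ r (u x₀ t₀) (D2φ x₀ t₀) ≤ 0)

/-- Viscosity subsolution of `∂ₜ u + F(u,Du,D²u) = 0` with terminal data `g`. -/
def SubSolF {n : ℕ} (T : ℝ) (σ : Fin n → ℝ) (μ : EuclideanSpace ℝ (Fin n)) (r : ℝ)
    (g : EuclideanSpace ℝ (Fin n) → ℝ) (u : EuclideanSpace ℝ (Fin n) → ℝ → ℝ) : Prop :=
  UpperSemicontinuousOn (fun q : EuclideanSpace ℝ (Fin n) × ℝ => u q.1 q.2) (Dom n T) ∧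
  LinGrowth T u ∧
  (∀ x, u x T ≤ g x) ∧
  ∀ x₀ t₀, t₀ ∈ Set.Ioo 0 T →
    ∀ φ φt Dφ D2φ, IsC12 φ φt Dφ D2φ →
      u x₀ t₀ = φ x₀ t₀ →
      (∀ x t, t ∈ Set.Icc 0 T → (x, t) ≠ (x₀, t₀) → u x t < φ x t) →
      (Dφ x₀ t₀ ≠ 0 →
        0 ≤ φt x₀ t₀ + Fop σ μ r (u x₀ t₀) (Dφ x₀ t₀) (D2φ x₀ t₀)) ∧
      (Dφ x₀ t₀ = 0 →
        0 ≤ φt x₀ t₀ + Fupper σ μ r (u x₀ t₀) (D2φ x₀ t₀))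

/-- Continuous viscosity solution of `∂ₜ u + F(u,Du,D²u) = 0` with terminal data `g`. -/
def SolF {n : ℕ} (T : ℝ) (σ : Fin n → ℝ) (μ : EuclideanSpace ℝ (Fin n)) (r : ℝ)
    (g : EuclideanSpace ℝ (Fin n) → ℝ) (u : EuclideanSpace ℝ (Fin n) → ℝ → ℝ) : Prop :=
  ContOn T u ∧ SuperSolF T σ μ r g u ∧ SubSolF T σ μ r g u

/-- The barrier `w̄(x,t) = g(y) + (A/ε²)(T−t) + 2L(|x−y|² + ε)^{1/2}`. -/
def barrierUp {n : ℕ} (g : EuclideanSpace ℝ (Fin n) → ℝ) (L A ε T : ℝ)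
    (y : EuclideanSpace ℝ (Fin n)) : EuclideanSpace ℝ (Fin n) → ℝ → ℝ :=
  fun x t => g y + (A / ε ^ 2) * (T - t) + 2 * L * Real.sqrt (‖x - y‖ ^ 2 + ε)

/-- The barrier `w̲(x,t) = g(y) − (A/ε²)(T−t) − 2L(|x−y|² + ε)^{1/2}`. -/
def barrierDown {n : ℕ} (g : EuclideanSpace ℝ (Fin n) → ℝ) (L A ε T : ℝ)
    (y : EuclideanSpace ℝ (Fin n)) : EuclideanSpace ℝ (Fin n) → ℝ → ℝ :=
  fun x t => g y - (A / ε ^ 2) * (T - t) - 2 * L * Real.sqrt (‖x - y‖ ^ 2 + ε)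

/-- `Φ̃(θ⁺,θ⁻,d⁺,d⁻,p,M)`: the part of `Φ` sensitive to the inf–sup. -/
def PhiT {n : ℕ} (σ : Fin n → ℝ) (θp θm : EuclideanSpace ℝ (Fin n)) (dp dm : ℝ)
    (p : EuclideanSpace ℝ (Fin n)) (M : Matrix (Fin n) (Fin n) ℝ) : ℝ :=
  -(1 / 2) * sigQF σ M (θp - θm) - (dp + dm) * ⟪θp + θm, p⟫

/-- `sup_{(θ⁻,d⁻)∈ℋ_m} Φ̃(θ⁺,θ⁻,d⁺,d⁻,p,M)` as a function of `a = (θ⁺,d⁺)`. -/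
def supPhiT {n : ℕ} (σ : Fin n → ℝ) (m : ℕ) (a : EuclideanSpace ℝ (Fin n) × ℝ)
    (p : EuclideanSpace ℝ (Fin n)) (M : Matrix (Fin n) (Fin n) ℝ) : ℝ :=
  sSup ((fun b => PhiT σ a.1 b.1 a.2 b.2 p M) '' Hset n m)

/-- `Φ̃_m(p,M) = inf_{(θ⁺,d⁺)∈ℋ_m} sup_{(θ⁻,d⁻)∈ℋ_m} Φ̃`. -/
def PhiTm {n : ℕ} (σ : Fin n → ℝ) (m : ℕ)
    (p : EuclideanSpace ℝ (Fin n)) (M : Matrix (Fin n) (Fin n) ℝ) : ℝ :=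
  sInf ((fun a => supPhiT σ m a p M) '' Hset n m)

/-- The set of values appearing in the parabolic sup-convolution. -/
def supConvSet {n : ℕ} (T ε : ℝ) (u : EuclideanSpace ℝ (Fin n) → ℝ → ℝ)
    (x₀ : EuclideanSpace ℝ (Fin n)) (t₀ : ℝ) : Set ℝ :=
  {y | ∃ x t, t ∈ Set.Icc 0 T ∧ y = u x t - ((t₀ - t) ^ 2 + ‖x₀ - x‖ ^ 2) / (2 * ε)}


def aSigB {n : ℕ} (σ : Fin n → ℝ) (M : Matrix (Fin n) (Fin n) ℝ)
    (v w : EuclideanSpace ℝ (Fin n)) : ℝ :=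
  ∑ i, ∑ j, (σ i * v i) * M i j * (σ j * w j)

def aCq {n : ℕ} (σ : Fin n → ℝ) (M : Matrix (Fin n) (Fin n) ℝ) : ℝ :=
  ∑ i, ∑ j, σ i * σ j * |M i j|

lemma coord_abs_le_norm {n : ℕ} (v : EuclideanSpace ℝ (Fin n)) (i : Fin n) :
    |v i| ≤ ‖v‖ := by
  rw [EuclideanSpace.norm_eq, show |v i| = Real.sqrt (|v i| ^ 2) by
    rw [Real.sqrt_sq (abs_nonneg _)]]
  apply Real.sqrt_le_sqrt
  simpa [Real.norm_eq_abs] using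
    Finset.single_le_sum (f := fun j => ‖v j‖ ^ 2) (fun j _ => sq_nonneg _) (Finset.mem_univ i)

lemma aCq_nonneg {n : ℕ} {σ : Fin n → ℝ} (hσ : ∀ i, 0 ≤ σ i)
    (M : Matrix (Fin n) (Fin n) ℝ) : 0 ≤ aCq σ M := by
  refine Finset.sum_nonneg fun i _ => Finset.sum_nonneg fun j _ => ?_
  have := hσ i; have := hσ j; positivity

lemma abs_aSigB_le {n : ℕ} {σ : Fin n → ℝ} (hσ : ∀ i, 0 ≤ σ i)
    (M : Matrix (Fin n) (Fin n) ℝ) (v w : EuclideanSpace ℝ (Fin n)) :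
    |aSigB σ M v w| ≤ aCq σ M * (‖v‖ * ‖w‖) := by
  unfold aSigB aCq
  calc |∑ i, ∑ j, (σ i * v i) * M i j * (σ j * w j)|
      ≤ ∑ i, |∑ j, (σ i * v i) * M i j * (σ j * w j)| := Finset.abs_sum_le_sum_abs _ _
    _ ≤ ∑ i, ∑ j, |(σ i * v i) * M i j * (σ j * w j)| :=
        Finset.sum_le_sum fun i _ => Finset.abs_sum_le_sum_abs _ _
    _ ≤ ∑ i, ∑ j, σ i * σ j * |M i j| * (‖v‖ * ‖w‖) := by
        refine Finset.sum_le_sum fun i _ => Finset.sum_le_sum fun j _ => ?_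
        have h1 : |(σ i * v i) * M i j * (σ j * w j)|
            = (σ i * σ j * |M i j|) * (|v i| * |w j|) := by
          rw [abs_mul, abs_mul, abs_mul, abs_mul, abs_of_nonneg (hσ i), abs_of_nonneg (hσ j)]
          ring
        rw [h1]
        have hcoef : (0:ℝ) ≤ σ i * σ j * |M i j| := by
          have := hσ i; have := hσ j; positivity
        refine mul_le_mul_of_nonneg_left ?_ hcoef
        exact mul_le_mul (coord_abs_le_norm v i) (coord_abs_le_norm w j)
          (abs_nonneg _) (norm_nonneg _)
    _ = (∑ i, ∑ j, σ i * σ j * |M i j|) * (‖v‖ * ‖w‖) := by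
        rw [Finset.sum_mul]; exact Finset.sum_congr rfl fun i _ => (Finset.sum_mul _ _ _).symm

lemma sigQF_eq_aSigB {n : ℕ} (σ : Fin n → ℝ) (M : Matrix (Fin n) (Fin n) ℝ)
    (v : EuclideanSpace ℝ (Fin n)) : sigQF σ M v = aSigB σ M v v := rfl

lemma sigQF_add {n : ℕ} (σ : Fin n → ℝ) (M : Matrix (Fin n) (Fin n) ℝ)
    (x y : EuclideanSpace ℝ (Fin n)) :
    sigQF σ M (x + y) = sigQF σ M x + aSigB σ M x y + aSigB σ M y x + sigQF σ M y := by
  unfold sigQF aSigB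
  rw [← Finset.sum_add_distrib, ← Finset.sum_add_distrib, ← Finset.sum_add_distrib]
  refine Finset.sum_congr rfl fun i _ => ?_
  rw [← Finset.sum_add_distrib, ← Finset.sum_add_distrib, ← Finset.sum_add_distrib]
  refine Finset.sum_congr rfl fun j _ => ?_
  simp only [PiLp.add_apply]
  ring

lemma sigQF_smul {n : ℕ} (σ : Fin n → ℝ) (M : Matrix (Fin n) (Fin n) ℝ)
    (c : ℝ) (v : EuclideanSpace ℝ (Fin n)) :
    sigQF σ M (c • v) = c ^ 2 * sigQF σ M v := by
  unfold sigQF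
  rw [Finset.mul_sum]
  refine Finset.sum_congr rfl fun i _ => ?_
  rw [Finset.mul_sum]
  refine Finset.sum_congr rfl fun j _ => ?_
  simp only [PiLp.smul_apply, smul_eq_mul]
  ring

lemma abs_sigQF_le {n : ℕ} {σ : Fin n → ℝ} (hσ : ∀ i, 0 ≤ σ i)
    (M : Matrix (Fin n) (Fin n) ℝ) (v : EuclideanSpace ℝ (Fin n)) :
    |sigQF σ M v| ≤ aCq σ M * (‖v‖ * ‖v‖) := by
  rw [sigQF_eq_aSigB]; exact abs_aSigB_le hσ M v v


lemma unitvec_mem {n : ℕ} {p : EuclideanSpace ℝ (Fin n)} (hp : p ≠ 0) (m : ℕ) :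
    ((‖p‖⁻¹ • p, (0:ℝ)) : EuclideanSpace ℝ (Fin n) × ℝ) ∈ Hset n m := by
  constructor
  · simp only [norm_smul, norm_inv, norm_norm]
    field_simp [norm_ne_zero_iff.mpr hp]
  · exact ⟨le_refl 0, Nat.cast_nonneg m⟩

lemma hset_nonempty {n : ℕ} {p : EuclideanSpace ℝ (Fin n)} (hp : p ≠ 0) (m : ℕ) :
    (Hset n m).Nonempty := ⟨_, unitvec_mem hp m⟩

/-- Pointwise upper bound for `Phi` over `a ∈ Hset`. -/
lemma phi_ub {n : ℕ} {σ : Fin n → ℝ} (hσ : ∀ i, 0 ≤ σ i)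
    (μ : EuclideanSpace ℝ (Fin n)) (m : ℕ)
    (p : EuclideanSpace ℝ (Fin n)) (M : Matrix (Fin n) (Fin n) ℝ)
    {b a : EuclideanSpace ℝ (Fin n) × ℝ} (hb : b ∈ Hset n m) (ha : a ∈ Hset n m) :
    Phi σ μ b.1 a.1 b.2 a.2 p M ≤
      2 * aCq σ M + (1/2) * |trSig2 σ M| + 2 * m * (2 * ‖p‖) + |⟪μ, p⟫| := by
  obtain ⟨hb1, hb2⟩ := hb
  obtain ⟨ha1, ha2⟩ := ha
  unfold Phi
  have hC := aCq_nonneg hσ M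
  have h1 : |sigQF σ M (b.1 - a.1)| ≤ aCq σ M * (2 * 2) := by
    refine le_trans (abs_sigQF_le hσ M _) ?_
    have hn : ‖b.1 - a.1‖ ≤ 2 := by
      calc ‖b.1 - a.1‖ ≤ ‖b.1‖ + ‖a.1‖ := norm_sub_le _ _
        _ = 2 := by rw [hb1, ha1]; norm_num
    have := mul_le_mul hn hn (norm_nonneg _) (by norm_num : (0:ℝ) ≤ 2)
    nlinarith
  have h2 : |⟪b.1 + a.1, p⟫| ≤ 2 * ‖p‖ := by
    refine le_trans (abs_real_inner_le_norm _ _) ?_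
    have : ‖b.1 + a.1‖ ≤ 2 := by
      calc ‖b.1 + a.1‖ ≤ ‖b.1‖ + ‖a.1‖ := norm_add_le _ _
        _ = 2 := by rw [hb1, ha1]; norm_num
    exact mul_le_mul_of_nonneg_right this (norm_nonneg _)
  have hd : b.2 + a.2 ≤ 2 * m := by
    have := hb2.2; have := ha2.2; linarith
  have hd0 : 0 ≤ b.2 + a.2 := by have := hb2.1; have := ha2.1; linarith
  have h3 : -((b.2 + a.2) * ⟪b.1 + a.1, p⟫) ≤ 2 * m * (2 * ‖p‖) := by
    have hXX : (0:ℝ) ≤ |⟪b.1 + a.1, p⟫| + ⟪b.1 + a.1, p⟫ := by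
      have := neg_abs_le (⟪b.1 + a.1, p⟫); linarith
    have hp1 : 0 ≤ (b.2 + a.2) * (|⟪b.1 + a.1, p⟫| + ⟪b.1 + a.1, p⟫) :=
      mul_nonneg hd0 hXX
    have hp2 : (b.2 + a.2) * |⟪b.1 + a.1, p⟫| ≤ 2 * m * (2 * ‖p‖) :=
      mul_le_mul hd h2 (abs_nonneg _) (by positivity)
    nlinarith
  have h4 : -(1/2) * sigQF σ M (b.1 - a.1) ≤ 2 * aCq σ M := by
    have := neg_abs_le (sigQF σ M (b.1 - a.1)); nlinarith
  have h5 : -(1/2) * trSig2 σ M ≤ (1/2) * |trSig2 σ M| := by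
    have := neg_abs_le (trSig2 σ M); linarith
  have h6 : -⟪μ, p⟫ ≤ |⟪μ, p⟫| := by have := neg_abs_le (⟪μ, p⟫); linarith
  linarith

lemma bddAbove_inner {n : ℕ} {σ : Fin n → ℝ} (hσ : ∀ i, 0 ≤ σ i)
    (μ : EuclideanSpace ℝ (Fin n)) (m : ℕ)
    (p : EuclideanSpace ℝ (Fin n)) (M : Matrix (Fin n) (Fin n) ℝ)
    {b : EuclideanSpace ℝ (Fin n) × ℝ} (hb : b ∈ Hset n m) :
    BddAbove ((fun a => Phi σ μ b.1 a.1 b.2 a.2 p M) '' Hset n m) := by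
  refine ⟨2 * aCq σ M + (1/2) * |trSig2 σ M| + 2 * m * (2 * ‖p‖) + |⟪μ, p⟫|, ?_⟩
  rintro x ⟨a, ha, rfl⟩
  exact phi_ub hσ μ m p M hb ha

/-- Uniform lower bound for the inner sup, over `b ∈ Hset`. -/
lemma sup_lb {n : ℕ} {σ : Fin n → ℝ} (hσ : ∀ i, 0 ≤ σ i)
    (μ : EuclideanSpace ℝ (Fin n)) (m : ℕ)
    (p : EuclideanSpace ℝ (Fin n)) (M : Matrix (Fin n) (Fin n) ℝ)
    {b : EuclideanSpace ℝ (Fin n) × ℝ} (hb : b ∈ Hset n m) :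
    -2 * aCq σ M - (1/2) * trSig2 σ M - ⟪μ, p⟫ ≤
      sSup ((fun a => Phi σ μ b.1 a.1 b.2 a.2 p M) '' Hset n m) := by
  have hmem : ((-b.1, (0:ℝ)) : EuclideanSpace ℝ (Fin n) × ℝ) ∈ Hset n m := by
    constructor
    · simpa [norm_neg] using hb.1
    · exact ⟨le_refl 0, Nat.cast_nonneg m⟩
  refine le_trans ?_ (le_csSup (bddAbove_inner hσ μ m p M hb)
    (Set.mem_image_of_mem _ hmem))
  have he : b.1 - (-b.1) = (2:ℝ) • b.1 := by
    rw [sub_neg_eq_add, two_smul]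
  have hval : Phi σ μ b.1 (-b.1) b.2 0 p M
      = -2 * sigQF σ M b.1 - (1/2) * trSig2 σ M - ⟪μ, p⟫ := by
    unfold Phi
    rw [he, sigQF_smul]
    simp [add_neg_cancel, inner_zero_left]
    ring
  rw [hval]
  have h1 : sigQF σ M b.1 ≤ aCq σ M := by
    have := le_of_abs_le (abs_sigQF_le hσ M b.1)
    rw [hb.1] at this; linarith
  linarith

/-- Lower bound: `Hminus ≥` a convergent quantity. -/
lemma hminus_ge {n : ℕ} {σ : Fin n → ℝ} (hσ : ∀ i, 0 ≤ σ i)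
    (μ : EuclideanSpace ℝ (Fin n)) (r ξ' : ℝ) (m : ℕ)
    {p : EuclideanSpace ℝ (Fin n)} (hp : p ≠ 0) (M : Matrix (Fin n) (Fin n) ℝ) :
    -2 * aCq σ M - (1/2) * trSig2 σ M - ⟪μ, p⟫ + r * ξ' ≤ Hminus σ μ r m ξ' p M := by
  unfold Hminus
  have h : -2 * aCq σ M - (1/2) * trSig2 σ M - ⟪μ, p⟫ ≤
      sInf ((fun b => sSup ((fun a => Phi σ μ b.1 a.1 b.2 a.2 p M) '' Hset n m)) '' Hset n m) := by
    refine le_csInf ((hset_nonempty hp m).image _) ?_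
    rintro x ⟨b, hb, rfl⟩
    exact sup_lb hσ μ m p M hb
  linarith

set_option maxHeartbeats 1000000 in
/-- Key upper bound for `Hminus` with `θ⁺ = p/‖p‖`, `d⁺ = m`. -/
lemma hminus_le {n : ℕ} {σ : Fin n → ℝ} (hσ : ∀ i, 0 ≤ σ i)
    (μ : EuclideanSpace ℝ (Fin n)) (r ξ' : ℝ) (m : ℕ) (hm : 1 ≤ m)
    {p : EuclideanSpace ℝ (Fin n)} (hp : p ≠ 0) (M : Matrix (Fin n) (Fin n) ℝ) :
    Hminus σ μ r m ξ' p M ≤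
      -((2 / ‖p‖ ^ 2) * sigQF σ M p + (1/2) * trSig2 σ M + ⟪μ, p⟫)
        + 9 * (aCq σ M) ^ 2 / (2 * ‖p‖) / m + r * ξ' := by
  have hpn : (0:ℝ) < ‖p‖ := norm_pos_iff.mpr hp
  set u : EuclideanSpace ℝ (Fin n) := ‖p‖⁻¹ • p with hu
  have hun : ‖u‖ = 1 := by
    rw [hu, norm_smul, norm_inv, norm_norm]; field_simp
  have hpu : p = ‖p‖ • u := by
    rw [hu, smul_smul, mul_inv_cancel₀ (ne_of_gt hpn), one_smul]
  have hb0 : ((u, (m:ℝ)) : EuclideanSpace ℝ (Fin n) × ℝ) ∈ Hset n m :=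
    ⟨hun, ⟨Nat.cast_nonneg m, le_refl _⟩⟩
  have hC := aCq_nonneg hσ M
  -- the pointwise estimate for any a ∈ Hset
  have hpoint : ∀ a ∈ Hset n m, Phi σ μ u a.1 (m:ℝ) a.2 p M ≤
      -((2 / ‖p‖ ^ 2) * sigQF σ M p + (1/2) * trSig2 σ M + ⟪μ, p⟫)
        + 9 * (aCq σ M) ^ 2 / (2 * ‖p‖) / m := by
    rintro ⟨θ, d⟩ ⟨hθ, hd0, hdm⟩
    set s : ℝ := ‖θ + u‖ with hs
    have hs0 : 0 ≤ s := norm_nonneg _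
    have hs2 : s ≤ 2 := by
      calc ‖θ + u‖ ≤ ‖θ‖ + ‖u‖ := norm_add_le _ _
        _ = 2 := by rw [hθ, hun]; norm_num
    -- inner product identity
    have hsq : s ^ 2 = 2 + 2 * ⟪θ, u⟫ := by
      rw [hs, norm_add_sq_real, hθ, hun]; ring
    have hip : ⟪u + θ, p⟫ = ‖p‖ * (s ^ 2 / 2) := by
      have h1 : ⟪u, p⟫ = ‖p‖ := by
        rw [hu, real_inner_smul_left, real_inner_self_eq_norm_sq, sq]
        field_simp
      have h2 : ⟪θ, p⟫ = ‖p‖ * ⟪θ, u⟫ := by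
        conv_lhs => rw [hpu]
        rw [real_inner_smul_right]
      rw [inner_add_left, h1, h2, hsq]; ring
    have hip0 : 0 ≤ ⟪u + θ, p⟫ := by rw [hip]; positivity
    -- quadratic term estimate
    have hdecomp : u - θ = (2:ℝ) • u + (-(θ + u)) := by
      simp [two_smul]; abel
    have hqf : sigQF σ M (u - θ) = 4 * sigQF σ M u
        + aSigB σ M ((2:ℝ) • u) (-(θ + u)) + aSigB σ M (-(θ + u)) ((2:ℝ) • u)
        + sigQF σ M (-(θ + u)) := by
      rw [hdecomp, sigQF_add, sigQF_smul]; ring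
    have hnorme : ‖-(θ + u)‖ = s := by rw [norm_neg]
    have hB1 : |aSigB σ M ((2:ℝ) • u) (-(θ + u))| ≤ 2 * aCq σ M * s := by
      have := abs_aSigB_le hσ M ((2:ℝ) • u) (-(θ + u))
      rw [norm_smul, hun, hnorme] at this
      simp only [Real.norm_eq_abs] at this
      calc |aSigB σ M ((2:ℝ) • u) (-(θ + u))| ≤ aCq σ M * (|(2:ℝ)| * 1 * s) := this
        _ = 2 * aCq σ M * s := by rw [abs_two]; ring
    have hB2 : |aSigB σ M (-(θ + u)) ((2:ℝ) • u)| ≤ 2 * aCq σ M * s := by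
      have := abs_aSigB_le hσ M (-(θ + u)) ((2:ℝ) • u)
      rw [norm_smul, hun, hnorme] at this
      simp only [Real.norm_eq_abs] at this
      calc |aSigB σ M (-(θ + u)) ((2:ℝ) • u)| ≤ aCq σ M * (s * (|(2:ℝ)| * 1)) := this
        _ = 2 * aCq σ M * s := by rw [abs_two]; ring
    have hB3 : |sigQF σ M (-(θ + u))| ≤ aCq σ M * (s * s) := by
      have := abs_sigQF_le hσ M (-(θ + u)); rwa [hnorme] at this
    have hqf_le : -(1/2) * sigQF σ M (u - θ) ≤ -2 * sigQF σ M u + 3 * aCq σ M * s := by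
      rw [hqf]
      have e1 := neg_abs_le (aSigB σ M ((2:ℝ) • u) (-(θ + u)))
      have e2 := neg_abs_le (aSigB σ M (-(θ + u)) ((2:ℝ) • u))
      have e3 := neg_abs_le (sigQF σ M (-(θ + u)))
      have hss : aCq σ M * (s * s) ≤ aCq σ M * (2 * s) := by
        refine mul_le_mul_of_nonneg_left ?_ hC
        nlinarith
      linarith
    -- drift (d) term
    have hdterm : -(((m:ℝ) + d) * ⟪u + θ, p⟫) ≤ -((m:ℝ) * (‖p‖ * (s ^ 2 / 2))) := by
      rw [← hip]
      have h1 : 0 ≤ d * ⟪u + θ, p⟫ := mul_nonneg hd0 hip0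
      have h2 : ((m:ℝ) + d) * ⟪u + θ, p⟫ = (m:ℝ) * ⟪u + θ, p⟫ + d * ⟪u + θ, p⟫ := by ring
      have h3 : (m:ℝ) * ⟪u + θ, p⟫ = (m:ℝ) * (‖p‖ * (s ^ 2 / 2)) := by rw [hip]
      linarith
    -- completing the square
    have hmpos : (0:ℝ) < (m:ℝ) := by exact_mod_cast Nat.lt_of_lt_of_le Nat.zero_lt_one hm
    have hsquare : 3 * aCq σ M * s - (m:ℝ) * (‖p‖ * (s ^ 2 / 2)) ≤
        9 * (aCq σ M) ^ 2 / (2 * ‖p‖) / m := by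
      rw [div_div, le_div_iff₀ (by positivity)]
      nlinarith [sq_nonneg ((m:ℝ) * ‖p‖ * s - 3 * aCq σ M)]
    -- sigQF at u
    have hqfu : sigQF σ M u = (‖p‖⁻¹) ^ 2 * sigQF σ M p := by
      rw [hu, sigQF_smul]
    have hqfu2 : -2 * sigQF σ M u = -((2 / ‖p‖ ^ 2) * sigQF σ M p) := by
      rw [hqfu]; field_simp
    unfold Phi
    have : -(1/2) * sigQF σ M (u - θ) - ((m:ℝ) + d) * ⟪u + θ, p⟫ ≤
        -((2 / ‖p‖ ^ 2) * sigQF σ M p) + 9 * (aCq σ M) ^ 2 / (2 * ‖p‖) / m := by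
      calc -(1/2) * sigQF σ M (u - θ) - ((m:ℝ) + d) * ⟪u + θ, p⟫
          ≤ (-2 * sigQF σ M u + 3 * aCq σ M * s) - (m:ℝ) * (‖p‖ * (s ^ 2 / 2)) := by
            have := hdterm; linarith [hqf_le]
        _ ≤ -2 * sigQF σ M u + 9 * (aCq σ M) ^ 2 / (2 * ‖p‖) / m := by linarith [hsquare]
        _ = -((2 / ‖p‖ ^ 2) * sigQF σ M p) + 9 * (aCq σ M) ^ 2 / (2 * ‖p‖) / m := by
            rw [hqfu2]
    linarith
  -- assemble
  unfold Hminus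
  have hkey : sInf ((fun b => sSup ((fun a => Phi σ μ b.1 a.1 b.2 a.2 p M) '' Hset n m)) '' Hset n m)
      ≤ -((2 / ‖p‖ ^ 2) * sigQF σ M p + (1/2) * trSig2 σ M + ⟪μ, p⟫)
        + 9 * (aCq σ M) ^ 2 / (2 * ‖p‖) / m := by
    refine le_trans (csInf_le ?_ (Set.mem_image_of_mem _ hb0)) ?_
    · refine ⟨-2 * aCq σ M - (1/2) * trSig2 σ M - ⟪μ, p⟫, ?_⟩
      rintro x ⟨b, hb, rfl⟩
      exact sup_lb hσ μ m p M hb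
    · refine csSup_le ((hset_nonempty hp m).image _) ?_
      rintro x ⟨a, ha, rfl⟩
      exact hpoint a ha
  linarith

/-- claim (5.6) in the proof of Lemma 5.1: upper bound in the limit,
`limsup_m H_m⁻(ξ_m, p_m, M_m) ≤ −F(ξ, p, M)`. -/
theorem limsup_upper_bound (n : ℕ) (hn : 1 ≤ n)
    (σ : Fin n → ℝ) (hσ : ∀ i, 0 < σ i) (μ : EuclideanSpace ℝ (Fin n))
    (r : ℝ) (hr : 0 ≤ r)
    (ξs : ℕ → ℝ) (ps : ℕ → EuclideanSpace ℝ (Fin n)) (Ms : ℕ → Matrix (Fin n) (Fin n) ℝ)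
    (ξ : ℝ) (p : EuclideanSpace ℝ (Fin n)) (M : Matrix (Fin n) (Fin n) ℝ)
    (hMs : ∀ m, (Ms m).IsSymm) (hM : M.IsSymm)
    (hps : ∀ m, ps m ≠ 0) (hp : p ≠ 0)
    (hξ : Tendsto ξs atTop (𝓝 ξ)) (hpt : Tendsto ps atTop (𝓝 p))
    (hMt : Tendsto Ms atTop (𝓝 M)) :
    Filter.limsup (fun m => Hminus σ μ r m (ξs m) (ps m) (Ms m)) atTop ≤
      -Fop σ μ r ξ p M := by
  have hσ' : ∀ i, 0 ≤ σ i := fun i => (hσ i).le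
  have hpn : (0:ℝ) < ‖p‖ := norm_pos_iff.mpr hp
  -- entrywise convergence of matrices and coordinates
  have hMij : ∀ i j, Tendsto (fun m => Ms m i j) atTop (𝓝 (M i j)) := by
    intro i j
    have hc : Continuous fun A : Matrix (Fin n) (Fin n) ℝ => A i j :=
      (continuous_apply j).comp (continuous_apply i)
    exact (hc.tendsto M).comp hMt
  have hpi : ∀ i, Tendsto (fun m => ps m i) atTop (𝓝 (p i)) := fun i =>
    ((EuclideanSpace.proj i).continuous.tendsto p).comp hpt
  -- convergence of the quantities appearing in the bounds
  have hsig : Tendsto (fun m => sigQF σ (Ms m) (ps m)) atTop (𝓝 (sigQF σ M p)) := by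
    unfold sigQF
    refine tendsto_finset_sum _ fun i _ => tendsto_finset_sum _ fun j _ => ?_
    exact ((tendsto_const_nhds.mul (hpi i)).mul (hMij i j)).mul
      (tendsto_const_nhds.mul (hpi j))
  have htr : Tendsto (fun m => trSig2 σ (Ms m)) atTop (𝓝 (trSig2 σ M)) := by
    unfold trSig2
    exact tendsto_finset_sum _ fun i _ => tendsto_const_nhds.mul (hMij i i)
  have hCqt : Tendsto (fun m => aCq σ (Ms m)) atTop (𝓝 (aCq σ M)) := by
    unfold aCq
    exact tendsto_finset_sum _ fun i _ => tendsto_finset_sum _ fun j _ =>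
      tendsto_const_nhds.mul (hMij i j).abs
  have hnorm : Tendsto (fun m => ‖ps m‖) atTop (𝓝 ‖p‖) := hpt.norm
  have hinner : Tendsto (fun m => (⟪μ, ps m⟫ : ℝ)) atTop (𝓝 ⟪μ, p⟫) :=
    tendsto_const_nhds.inner hpt
  -- the upper sequence G
  set G : ℕ → ℝ := fun m =>
    -((2 / ‖ps m‖ ^ 2) * sigQF σ (Ms m) (ps m) + (1/2) * trSig2 σ (Ms m) + ⟪μ, ps m⟫)
      + 9 * (aCq σ (Ms m)) ^ 2 / (2 * ‖ps m‖) / m + r * ξs m with hG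
  have herr : Tendsto (fun m : ℕ => 9 * (aCq σ (Ms m)) ^ 2 / (2 * ‖ps m‖) / (m:ℝ))
      atTop (𝓝 0) := by
    refine Tendsto.div_atTop (a := 9 * (aCq σ M) ^ 2 / (2 * ‖p‖)) ?_ tendsto_natCast_atTop_atTop
    exact (tendsto_const_nhds.mul (hCqt.pow 2)).div
      (tendsto_const_nhds.mul hnorm) (by positivity)
  have hGt : Tendsto G atTop (𝓝 (-Fop σ μ r ξ p M)) := by
    have h1 : Tendsto (fun m =>
        -((2 / ‖ps m‖ ^ 2) * sigQF σ (Ms m) (ps m) + (1/2) * trSig2 σ (Ms m) + ⟪μ, ps m⟫))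
        atTop (𝓝 (-((2 / ‖p‖ ^ 2) * sigQF σ M p + (1/2) * trSig2 σ M + ⟪μ, p⟫))) := by
      refine Tendsto.neg ?_
      refine Tendsto.add (Tendsto.add ?_ (tendsto_const_nhds.mul htr)) hinner
      exact (tendsto_const_nhds.div (hnorm.pow 2) (by positivity)).mul hsig
    have h2 := (h1.add herr).add (hξ.const_mul r)
    have hval : -((2 / ‖p‖ ^ 2) * sigQF σ M p + (1/2) * trSig2 σ M + ⟪μ, p⟫) + 0 + r * ξ
        = -Fop σ μ r ξ p M := by
      unfold Fop; ring
    rw [hval] at h2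
    exact h2
  -- eventual inequality
  have hle : (fun m => Hminus σ μ r m (ξs m) (ps m) (Ms m)) ≤ᶠ[atTop] G := by
    filter_upwards [eventually_ge_atTop 1] with m hm
    exact hminus_le hσ' μ r (ξs m) m hm (hps m) (Ms m)
  -- coboundedness of the LHS
  have hGlo : Tendsto (fun m => -2 * aCq σ (Ms m) - (1/2) * trSig2 σ (Ms m)
      - ⟪μ, ps m⟫ + r * ξs m) atTop
      (𝓝 (-2 * aCq σ M - (1/2) * trSig2 σ M - ⟪μ, p⟫ + r * ξ)) :=
    (((tendsto_const_nhds.mul hCqt).sub (tendsto_const_nhds.mul htr)).sub hinner).add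
      (tendsto_const_nhds.mul hξ)
  have hcob : IsCoboundedUnder (· ≤ ·) atTop
      (fun m => Hminus σ μ r m (ξs m) (ps m) (Ms m)) := by
    refine (hGlo.isBoundedUnder_ge.mono_ge ?_).isCoboundedUnder_le
    filter_upwards with m
    exact hminus_ge hσ' μ r (ξs m) m (hps m) (Ms m)
  calc Filter.limsup (fun m => Hminus σ μ r m (ξs m) (ps m) (Ms m)) atTop
      ≤ Filter.limsup G atTop := limsup_le_limsup hle hcob hGt.isBoundedUnder_le
    _ = -Fop σ μ r ξ p M := hGt.limsup_eq

end TugOfWar
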